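/- Let (T_t)_{t≥0} be a strongly continuous semigroup on a Banach space X with ‖T_t‖ ≤ M e^{−λt} for all t ≥ 0 (M, λ > 0), let B : U → X be a bounded linear operator, and define V(x) := ∫_0^∞ ‖T_t x‖_X² dt. Then for every x ∈ X, every globally bounded, piecewise continuous input u : [0,∞) → U that is right-continuous at 0, and every ε > 0, the Dini derivative of V along the mild solution φ(t,x,u) = T_t x + ∫_0^t T_{t−s} B u(s) ds satisfies V̇_u(x) := limsup_{h→0+} (V(φ(h,x,u)) − V(x))/h ≤ −‖x‖_X² + (ε M²/(2λ)) ‖x‖_X² + (M²/(2λε)) ‖B‖² ‖u(0)‖_U². -/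

import Mathlib

open Set Filter Topology MeasureTheory

section Defs

variable {X : Type*} [NormedAddCommGroup X] [NormedSpace ℝ X] [CompleteSpace X]
variable {U : Type*} [NormedAddCommGroup U] [NormedSpace ℝ U]

/-- Class `K` functions: continuous, strictly increasing on `[0,∞)` and vanishing at `0`. -/
def ClassK (γ : ℝ → ℝ) : Prop :=
  ContinuousOn γ (Ici 0) ∧ StrictMonoOn γ (Ici 0) ∧ γ 0 = 0

/-- Class `K∞` functions: class `K` and unbounded. -/
def ClassKinf (γ : ℝ → ℝ) : Prop :=
  ClassK γ ∧ ∀ M : ℝ, ∃ r : ℝ, 0 ≤ r ∧ M < γ r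

/-- Class `KL` functions. -/
def ClassKL (β : ℝ → ℝ → ℝ) : Prop :=
  ContinuousOn (fun p : ℝ × ℝ => β p.1 p.2) (Ici 0 ×ˢ Ici 0) ∧
  (∀ t : ℝ, 0 ≤ t → ClassK (fun r => β r t)) ∧
  (∀ r : ℝ, 0 < r →
    StrictAntiOn (fun t => β r t) (Ici 0) ∧ Tendsto (fun t => β r t) atTop (nhds 0))

/-- Continuous positive definite functions on `[0,∞)`. -/
def ClassPD (α : ℝ → ℝ) : Prop :=
  ContinuousOn α (Ici 0) ∧ α 0 = 0 ∧ ∀ r : ℝ, 0 < r → 0 < α r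

/-- A strongly continuous semigroup of bounded linear operators on `X`,
parametrized by `t : ℝ` (only the values for `t ≥ 0` matter). -/
def IsC0Semigroup (T : ℝ → X →L[ℝ] X) : Prop :=
  T 0 = 1 ∧ (∀ s : ℝ, 0 ≤ s → ∀ t : ℝ, 0 ≤ t → T (s + t) = (T s).comp (T t)) ∧
  ∀ x : X, ContinuousOn (fun t => T t x) (Ici 0)

/-- Piecewise continuous functions: on each compact interval, continuous up to
finitely many exceptional points. -/
def PiecewiseContinuous (u : ℝ → U) : Prop :=
  ∀ a b : ℝ, ∃ S : Finset ℝ, ∀ t ∈ Icc a b, t ∉ S → ContinuousAt u t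

/-- Admissible inputs: globally bounded (on `[0,∞)`) piecewise continuous functions. -/
def AdmissibleInput (u : ℝ → U) : Prop :=
  PiecewiseContinuous u ∧ ∃ C : ℝ, ∀ t : ℝ, 0 ≤ t → ‖u t‖ ≤ C

/-- Admissible disturbances: piecewise continuous functions with values in the
closed unit ball of `U`. -/
def AdmissibleDisturbance (d : ℝ → U) : Prop :=
  PiecewiseContinuous d ∧ ∀ t : ℝ, 0 ≤ t → ‖d t‖ ≤ 1

/-- The sup-norm of an input over `[0,∞)`. -/
noncomputable def supNorm (u : ℝ → U) : ℝ := ⨆ t : Ici (0:ℝ), ‖u ↑t‖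

/-- Mild solutions of `ẋ = Ax + f(x,u)`:
`φ(t) = T_t x₀ + ∫_0^t T_{t-s} f(φ(s), u(s)) ds`, continuous on `[0,∞)`. -/
def IsMildSolution (T : ℝ → X →L[ℝ] X) (f : X → U → X) (x₀ : X) (u : ℝ → U)
    (φ : ℝ → X) : Prop :=
  φ 0 = x₀ ∧ ContinuousOn φ (Ici 0) ∧
  ∀ t : ℝ, 0 ≤ t → φ t = T t x₀ + ∫ s in (0:ℝ)..t, T (t - s) (f (φ s) (u s))

/-- `f : X × U → X` is bi-Lipschitz continuous on bounded sets. -/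
def BiLipschitzOnBounded (f : X → U → X) : Prop :=
  (∀ C : ℝ, 0 < C → ∃ L : ℝ, 0 < L ∧ ∀ x y : X, ‖x‖ ≤ C → ‖y‖ ≤ C → ∀ v : U,
      ‖f x v - f y v‖ ≤ L * ‖x - y‖) ∧
  (∀ C : ℝ, 0 < C → ∃ L : ℝ, 0 < L ∧ ∀ u v : U, ‖u‖ ≤ C → ‖v‖ ≤ C → ∀ x : X,
      ‖f x u - f x v‖ ≤ L * ‖u - v‖)

/-- Lipschitz continuity on bounded balls. -/
def LipschitzOnBoundedBalls {Y : Type*} [NormedAddCommGroup Y] (V : X → Y) : Prop :=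
  ∀ r : ℝ, 0 < r → ∃ L : ℝ, 0 < L ∧ ∀ x y : X, ‖x‖ ≤ r → ‖y‖ ≤ r →
    ‖V x - V y‖ ≤ L * ‖x - y‖

/-- The (upper right) Dini derivative of `V` along a trajectory `ψ`, at the point `x`. -/
noncomputable def DiniDerivAlong (V : X → ℝ) (ψ : ℝ → X) (x : X) : EReal :=
  Filter.limsup (fun t : ℝ => (((V (ψ t) - V x) / t : ℝ) : EReal)) (nhdsWithin 0 (Ioi 0))

/-- Input-to-state stability of `ẋ = Ax + f(x,u)`: forward completeness plus
a `KL`/`K` estimate on all mild solutions. -/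
def ISSProp (T : ℝ → X →L[ℝ] X) (f : X → U → X) : Prop :=
  (∀ (x : X) (u : ℝ → U), AdmissibleInput u → ∃ ψs : ℝ → X, IsMildSolution T f x u ψs) ∧
  ∃ (β : ℝ → ℝ → ℝ) (γ : ℝ → ℝ), ClassKL β ∧ ClassK γ ∧
    ∀ (x : X) (u : ℝ → U) (ψs : ℝ → X), AdmissibleInput u → IsMildSolution T f x u ψs →
      ∀ t : ℝ, 0 ≤ t → ‖ψs t‖ ≤ β ‖x‖ t + γ (supNorm u)

/-- Weak uniform robust asymptotic stability of `ẋ = Ax + f(x,u)`: there is a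
feedback `φfb ≥ ψ(‖·‖)`, Lipschitz on bounded balls, such that the closed-loop
system `ẋ = Ax + f(x, d(t)·φfb(x))` is forward complete and UGAS, uniformly over
all piecewise continuous disturbances with values in the unit ball. -/
def WURSProp (T : ℝ → X →L[ℝ] X) (f : X → U → X) : Prop :=
  ∃ (φfb : X → ℝ) (ψ : ℝ → ℝ) (β : ℝ → ℝ → ℝ),
    (∀ x : X, 0 ≤ φfb x) ∧ LipschitzOnBoundedBalls φfb ∧ ClassKinf ψ ∧
    (∀ x : X, ψ ‖x‖ ≤ φfb x) ∧ ClassKL β ∧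
    ∀ (x : X) (d : ℝ → U), AdmissibleDisturbance d →
      (∃ ψs : ℝ → X, IsMildSolution T (fun z v => f z (φfb z • v)) x d ψs) ∧
      ∀ ψs : ℝ → X, IsMildSolution T (fun z v => f z (φfb z • v)) x d ψs →
        ∀ t : ℝ, 0 ≤ t → ‖ψs t‖ ≤ β ‖x‖ t

/-- Existence of a coercive ISS Lyapunov function (in implication form) which is
Lipschitz continuous on bounded balls. -/
def CoerciveISSLF (T : ℝ → X →L[ℝ] X) (f : X → U → X) : Prop :=
  ∃ (V : X → ℝ) (ψ₁ ψ₂ χ α : ℝ → ℝ),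
    LipschitzOnBoundedBalls V ∧ ClassKinf ψ₁ ∧ ClassKinf ψ₂ ∧ ClassK χ ∧ ClassPD α ∧
    (∀ x : X, ψ₁ ‖x‖ ≤ V x ∧ V x ≤ ψ₂ ‖x‖) ∧
    ∀ (x : X) (u : ℝ → U), AdmissibleInput u → χ ‖u 0‖ ≤ ‖x‖ →
      ∀ ψs : ℝ → X, IsMildSolution T f x u ψs →
        DiniDerivAlong V ψs x ≤ ((-α ‖x‖ : ℝ) : EReal)

end Defs


section AuxProofs

open MeasureTheory Real Set Filter Topology intervalIntegral

variable {X : Type*} [NormedAddCommGroup X] [NormedSpace ℝ X] [CompleteSpace X]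

/-- Joint continuity of a strongly continuous, uniformly bounded operator family. -/
lemma aux_joint_cont (T : ℝ → X →L[ℝ] X) (M : ℝ)
    (hbound : ∀ t : ℝ, 0 ≤ t → ‖T t‖ ≤ M)
    (hscont : ∀ x : X, ContinuousOn (fun t => T t x) (Ici 0)) :
    ContinuousOn (fun p : ℝ × X => T p.1 p.2) (Ici 0 ×ˢ (univ : Set X)) := by
  rintro ⟨t0, x0⟩ ⟨ht0, -⟩
  have h1 : Tendsto (fun p : ℝ × X => T p.1 (p.2 - x0)) (𝓝[Ici 0 ×ˢ univ] (t0, x0)) (𝓝 0) := by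
    have hg : Tendsto (fun p : ℝ × X => M * ‖p.2 - x0‖) (𝓝[Ici 0 ×ˢ univ] (t0, x0))
        (𝓝 (M * ‖x0 - x0‖)) := by
      apply Tendsto.const_mul
      exact ((continuous_snd.sub continuous_const).norm.tendsto _).mono_left nhdsWithin_le_nhds
    rw [show x0 - x0 = 0 by abel] at hg
    simp only [norm_zero, mul_zero] at hg
    apply squeeze_zero_norm' _ hg
    filter_upwards [self_mem_nhdsWithin] with p hp
    calc ‖T p.1 (p.2 - x0)‖ ≤ ‖T p.1‖ * ‖p.2 - x0‖ := (T p.1).le_opNorm _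
      _ ≤ M * ‖p.2 - x0‖ := by
          apply mul_le_mul_of_nonneg_right (hbound _ hp.1) (norm_nonneg _)
  have h2 : Tendsto (fun p : ℝ × X => T p.1 x0) (𝓝[Ici 0 ×ˢ univ] (t0, x0)) (𝓝 (T t0 x0)) := by
    have hfst : Tendsto (fun p : ℝ × X => p.1) (𝓝[Ici 0 ×ˢ univ] (t0, x0)) (𝓝[Ici 0] t0) := by
      apply tendsto_nhdsWithin_of_tendsto_nhds_of_eventually_within
      · exact (continuous_fst.tendsto (t0, x0)).mono_left nhdsWithin_le_nhds
      · filter_upwards [self_mem_nhdsWithin] with p hp using hp.1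
    exact ((hscont x0 t0 ht0).tendsto).comp hfst
  have h3 := h1.add h2
  rw [zero_add] at h3
  refine h3.congr (fun p => ?_)
  rw [map_sub]
  abel

lemma aux_opnorm_le (T : ℝ → X →L[ℝ] X) (M lam : ℝ) (hM : 0 < M)
    (hTdecay : ∀ t : ℝ, 0 ≤ t → ‖T t‖ ≤ M * Real.exp (-lam * t)) (hlam : 0 < lam) :
    ∀ t : ℝ, 0 ≤ t → ‖T t‖ ≤ M := by
  intro t ht
  refine (hTdecay t ht).trans ?_
  have : Real.exp (-lam * t) ≤ 1 := by
    rw [← Real.exp_zero]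
    apply Real.exp_le_exp.2
    nlinarith
  nlinarith

lemma aux_integrable (T : ℝ → X →L[ℝ] X) (M lam : ℝ) (hM : 0 < M) (hlam : 0 < lam)
    (hTdecay : ∀ t : ℝ, 0 ≤ t → ‖T t‖ ≤ M * Real.exp (-lam * t))
    (hscont : ∀ x : X, ContinuousOn (fun t => T t x) (Ici 0)) (z : X) :
    IntegrableOn (fun t => ‖T t z‖ ^ 2) (Ioi (0:ℝ)) := by
  have hmeas : AEStronglyMeasurable (fun t => ‖T t z‖ ^ 2) (volume.restrict (Ioi (0:ℝ))) := by
    apply ContinuousOn.aestronglyMeasurable _ measurableSet_Ioi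
    exact (((hscont z).mono Ioi_subset_Ici_self).norm).pow 2
  apply Integrable.mono' (g := fun t => (M * ‖z‖) ^ 2 * Real.exp (-(2 * lam) * t))
  · exact ((exp_neg_integrableOn_Ioi 0 (by positivity : (0:ℝ) < 2 * lam)).const_mul _)
  · exact hmeas
  · filter_upwards [ae_restrict_mem measurableSet_Ioi] with t ht
    have h1 : ‖T t z‖ ≤ M * Real.exp (-lam * t) * ‖z‖ := by
      calc ‖T t z‖ ≤ ‖T t‖ * ‖z‖ := (T t).le_opNorm _
        _ ≤ M * Real.exp (-lam * t) * ‖z‖ :=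
            mul_le_mul_of_nonneg_right (hTdecay t (le_of_lt ht)) (norm_nonneg _)
    have h2 : ‖T t z‖ ^ 2 ≤ (M * Real.exp (-lam * t) * ‖z‖) ^ 2 :=
      pow_le_pow_left₀ (norm_nonneg _) h1 2
    have h3 : (M * Real.exp (-lam * t) * ‖z‖) ^ 2
        = (M * ‖z‖) ^ 2 * Real.exp (-(2 * lam) * t) := by
      rw [show (-(2 * lam) * t) = (-lam * t) + (-lam * t) by ring, Real.exp_add]
      ring
    rw [Real.norm_of_nonneg (by positivity)]
    linarith [h2, h3.le]

lemma aux_exp_integral (b : ℝ) (hb : 0 < b) :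
    ∫ t in Ioi (0:ℝ), Real.exp (-b * t) = 1 / b := by
  have hderiv : ∀ t ∈ Ici (0:ℝ), HasDerivAt (fun y => -Real.exp (-b * y) / b)
      (Real.exp (-b * t)) t := by
    intro t _
    have h1 : HasDerivAt (fun y : ℝ => -b * y) (-b * 1) t := (hasDerivAt_id t).const_mul (-b)
    have h2 := (h1.exp).neg.div_const b
    refine h2.congr_deriv ?_
    rw [div_eq_iff hb.ne']; ring
  have htend : Tendsto (fun y => -Real.exp (-b * y) / b) atTop (𝓝 (-0 / b)) := by
    apply Tendsto.div_const
    apply Tendsto.neg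
    exact Real.tendsto_exp_atBot.comp (tendsto_id.const_mul_atTop_of_neg (by linarith))
  rw [neg_zero, zero_div] at htend
  have := integral_Ioi_of_hasDerivAt_of_tendsto' hderiv
    (exp_neg_integrableOn_Ioi 0 hb) htend
  rw [this]
  simp [Real.exp_zero]
  field_simp


variable {U : Type*} [NormedAddCommGroup U] [NormedSpace ℝ U]

lemma aux_shift (T : ℝ → X →L[ℝ] X)
    (hTsem : ∀ s : ℝ, 0 ≤ s → ∀ t : ℝ, 0 ≤ t → T (s + t) = (T s).comp (T t))
    (x : X) (hint : IntegrableOn (fun t => ‖T t x‖ ^ 2) (Ioi (0:ℝ)))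
    (h : ℝ) (hh : 0 < h) :
    (∫ t in Ioi (0:ℝ), ‖T t (T h x)‖ ^ 2)
      = (∫ t in Ioi (0:ℝ), ‖T t x‖ ^ 2) - ∫ t in (0:ℝ)..h, ‖T t x‖ ^ 2 := by
  have h1 : (∫ t in Ioi (0:ℝ), ‖T t (T h x)‖ ^ 2)
      = ∫ t in Ioi (0:ℝ), ‖T (t + h) x‖ ^ 2 := by
    apply setIntegral_congr_fun measurableSet_Ioi
    intro t ht
    show ‖T t (T h x)‖ ^ 2 = ‖T (t + h) x‖ ^ 2
    rw [hTsem t (le_of_lt ht) h hh.le]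
    rfl
  have h2 : (∫ t in Ioi (0:ℝ), ‖T (t + h) x‖ ^ 2) = ∫ t in Ioi h, ‖T t x‖ ^ 2 := by
    have hpre : (fun t : ℝ => t + h) ⁻¹' (Ioi h) = Ioi 0 := by
      ext t; simp
    have h3 := (measurePreserving_add_right volume h).setIntegral_preimage_emb
      (MeasurableEquiv.addRight h).measurableEmbedding (fun t => ‖T t x‖ ^ 2) (Ioi h)
    rw [hpre] at h3
    exact h3
  have h3 : (∫ t in Ioi (0:ℝ), ‖T t x‖ ^ 2)
      = (∫ t in Ioc (0:ℝ) h, ‖T t x‖ ^ 2) + ∫ t in Ioi h, ‖T t x‖ ^ 2 := by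
    rw [← setIntegral_union (Ioc_disjoint_Ioi le_rfl) measurableSet_Ioi
      (hint.mono_set Ioc_subset_Ioi_self) (hint.mono_set (Ioi_subset_Ioi hh.le)),
      Ioc_union_Ioi_eq_Ioi hh.le]
  rw [h1, h2, intervalIntegral.integral_of_le hh.le, h3]
  ring

lemma aux_diff (T : ℝ → X →L[ℝ] X) (M lam : ℝ) (hM : 0 < M) (hlam : 0 < lam)
    (hTdecay : ∀ t : ℝ, 0 ≤ t → ‖T t‖ ≤ M * Real.exp (-lam * t))
    (hscont : ∀ x : X, ContinuousOn (fun t => T t x) (Ici 0)) (a z : X) :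
    (∫ t in Ioi (0:ℝ), ‖T t (a + z)‖ ^ 2) - (∫ t in Ioi (0:ℝ), ‖T t a‖ ^ 2)
      ≤ M ^ 2 / (2 * lam) * ((2 * ‖a‖ + ‖z‖) * ‖z‖) := by
  have hint := aux_integrable T M lam hM hlam hTdecay hscont
  have key : ∀ t ∈ Ioi (0:ℝ), ‖T t (a + z)‖ ^ 2
      ≤ ‖T t a‖ ^ 2 + (2 * ‖a‖ + ‖z‖) * ‖z‖ * (M ^ 2 * Real.exp (-(2 * lam) * t)) := by
    intro t ht
    have ht' : (0:ℝ) ≤ t := le_of_lt ht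
    have hTa : ‖T t a‖ ≤ M * Real.exp (-lam * t) * ‖a‖ :=
      ((T t).le_opNorm a).trans
        (mul_le_mul_of_nonneg_right (hTdecay t ht') (norm_nonneg _))
    have hTz : ‖T t z‖ ≤ M * Real.exp (-lam * t) * ‖z‖ :=
      ((T t).le_opNorm z).trans
        (mul_le_mul_of_nonneg_right (hTdecay t ht') (norm_nonneg _))
    have htri : ‖T t (a + z)‖ ≤ ‖T t a‖ + ‖T t z‖ := by
      rw [map_add]; exact norm_add_le _ _
    have hexp : Real.exp (-(2 * lam) * t) = Real.exp (-lam * t) ^ 2 := by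
      rw [show (-(2 * lam) * t) = (-lam * t) + (-lam * t) by ring, Real.exp_add]
      ring
    have h1 : ‖T t a‖ * ‖T t z‖
        ≤ (M * Real.exp (-lam * t) * ‖a‖) * (M * Real.exp (-lam * t) * ‖z‖) :=
      mul_le_mul hTa hTz (norm_nonneg _) (by positivity)
    have h2 : ‖T t z‖ ^ 2 ≤ (M * Real.exp (-lam * t) * ‖z‖) ^ 2 :=
      pow_le_pow_left₀ (norm_nonneg _) hTz 2
    have h3 : ‖T t (a + z)‖ ^ 2 ≤ (‖T t a‖ + ‖T t z‖) ^ 2 :=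
      pow_le_pow_left₀ (norm_nonneg _) htri 2
    rw [hexp]
    nlinarith [norm_nonneg (T t a), norm_nonneg (T t z)]
  have hIa := hint a
  have hIe : IntegrableOn
      (fun t => (2 * ‖a‖ + ‖z‖) * ‖z‖ * (M ^ 2 * Real.exp (-(2 * lam) * t))) (Ioi (0:ℝ)) :=
    (((exp_neg_integrableOn_Ioi 0 (by positivity : (0:ℝ) < 2 * lam)).const_mul
      (M ^ 2)).const_mul _)
  have hmono : (∫ t in Ioi (0:ℝ), ‖T t (a + z)‖ ^ 2) ≤ ∫ t in Ioi (0:ℝ),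
      (‖T t a‖ ^ 2 + (2 * ‖a‖ + ‖z‖) * ‖z‖ * (M ^ 2 * Real.exp (-(2 * lam) * t))) :=
    setIntegral_mono_on (hint (a + z)) (hIa.add hIe) measurableSet_Ioi key
  rw [integral_add hIa hIe] at hmono
  have hval : (∫ t in Ioi (0:ℝ), (2 * ‖a‖ + ‖z‖) * ‖z‖ * (M ^ 2 * Real.exp (-(2 * lam) * t)))
      = (2 * ‖a‖ + ‖z‖) * ‖z‖ * (M ^ 2 * (1 / (2 * lam))) := by
    have e1 : ∀ t : ℝ, (2 * ‖a‖ + ‖z‖) * ‖z‖ * (M ^ 2 * Real.exp (-(2 * lam) * t))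
        = ((2 * ‖a‖ + ‖z‖) * ‖z‖ * M ^ 2) * Real.exp (-(2 * lam) * t) := fun t => by ring
    simp_rw [e1]
    rw [MeasureTheory.integral_const_mul, aux_exp_integral (2 * lam) (by positivity)]
    ring
  rw [hval] at hmono
  have e2 : M ^ 2 / (2 * lam) * ((2 * ‖a‖ + ‖z‖) * ‖z‖)
      = (2 * ‖a‖ + ‖z‖) * ‖z‖ * (M ^ 2 * (1 / (2 * lam))) := by ring
  rw [e2]
  linarith [hmono]

lemma aux_ii (T : ℝ → X →L[ℝ] X) (M : ℝ) (hM : 0 < M)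
    (hTM : ∀ t : ℝ, 0 ≤ t → ‖T t‖ ≤ M)
    (hscont : ∀ x : X, ContinuousOn (fun t => T t x) (Ici 0))
    (B : U →L[ℝ] X) (u : ℝ → U) (hupc : PiecewiseContinuous u)
    (C : ℝ) (hC : ∀ t : ℝ, 0 ≤ t → ‖u t‖ ≤ C)
    (h : ℝ) (hh : 0 < h) :
    IntervalIntegrable (fun s => T (h - s) (B (u s))) volume 0 h := by
  have hjoint := aux_joint_cont T M hTM hscont
  rw [intervalIntegrable_iff_integrableOn_Ioc_of_le hh.le]
  obtain ⟨S, hS⟩ := hupc 0 h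
  have hSmeas : MeasurableSet (Ioc (0:ℝ) h \ ↑S) :=
    measurableSet_Ioc.diff (S.finite_toSet.measurableSet)
  have hcont : ContinuousOn (fun s : ℝ => T (h - s) (B (u s))) (Ioc (0:ℝ) h \ ↑S) := by
    intro s hs
    have hs1 : s ∈ Ioc (0:ℝ) h := hs.1
    have hu_c : ContinuousAt u s := hS s (mem_Icc.2 ⟨hs1.1.le, hs1.2⟩) hs.2
    have hpair : ContinuousWithinAt (fun s : ℝ => ((h - s : ℝ), B (u s)))
        (Ioc (0:ℝ) h \ ↑S) s :=
      (((continuous_const.sub continuous_id).continuousAt).prodMk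
        (B.continuous.continuousAt.comp hu_c)).continuousWithinAt
    have hmem : ((h - s : ℝ), B (u s)) ∈ (Ici (0:ℝ)) ×ˢ (univ : Set X) :=
      ⟨mem_Ici.2 (sub_nonneg.2 hs1.2), mem_univ _⟩
    refine ContinuousWithinAt.comp (f := fun s : ℝ => ((h - s : ℝ), B (u s)))
      (hjoint _ hmem) hpair ?_
    intro y hy
    exact ⟨mem_Ici.2 (sub_nonneg.2 hy.1.2), mem_univ _⟩
  have haesm0 : AEStronglyMeasurable (fun s : ℝ => T (h - s) (B (u s)))
      (volume.restrict (Ioc (0:ℝ) h \ ↑S)) := hcont.aestronglyMeasurable hSmeas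
  have hres : volume.restrict (Ioc (0:ℝ) h \ ↑S) = volume.restrict (Ioc (0:ℝ) h) := by
    apply Measure.restrict_congr_set
    apply MeasureTheory.diff_ae_eq_self.2
    exact measure_mono_null inter_subset_right (S.finite_toSet.measure_zero _)
  rw [hres] at haesm0
  apply Integrable.mono' (g := fun _ : ℝ => M * (‖B‖ * C)) ?_ haesm0 ?_
  · exact integrableOn_const measure_Ioc_lt_top.ne
  · filter_upwards [ae_restrict_mem measurableSet_Ioc] with s hs
    calc ‖T (h - s) (B (u s))‖ ≤ ‖T (h - s)‖ * ‖B (u s)‖ := (T (h - s)).le_opNorm _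
      _ ≤ M * (‖B‖ * C) := by
          apply mul_le_mul (hTM _ (by linarith [hs.2])) ?_ (norm_nonneg _) hM.le
          calc ‖B (u s)‖ ≤ ‖B‖ * ‖u s‖ := B.le_opNorm _
            _ ≤ ‖B‖ * C := mul_le_mul_of_nonneg_left (hC s hs.1.le) (norm_nonneg B)

lemma aux_avg (T : ℝ → X →L[ℝ] X) (hT0 : T 0 = 1)
    (hTcont : ∀ x : X, ContinuousOn (fun t => T t x) (Ici 0)) (x : X) :
    Tendsto (fun h : ℝ => (∫ t in (0:ℝ)..h, ‖T t x‖ ^ 2) / h)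
      (nhdsWithin 0 (Ioi 0)) (nhds (‖x‖ ^ 2)) := by
  rw [Metric.tendsto_nhdsWithin_nhds]
  intro δε hδε
  have hc : ContinuousWithinAt (fun t : ℝ => ‖T t x‖ ^ 2) (Ici 0) 0 :=
    ((hTcont x 0 (mem_Ici.2 le_rfl)).norm).pow 2
  rw [Metric.continuousWithinAt_iff] at hc
  obtain ⟨δ, hδ, hδc⟩ := hc (δε / 2) (by linarith)
  refine ⟨δ, hδ, ?_⟩
  intro h hh hhd
  have hh' : (0:ℝ) < h := hh
  have hhδ : h < δ := by rwa [Real.dist_eq, sub_zero, abs_of_pos hh'] at hhd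
  have hFI : IntervalIntegrable (fun t : ℝ => ‖T t x‖ ^ 2) volume 0 h := by
    apply ContinuousOn.intervalIntegrable
    apply (((hTcont x).norm).pow 2).mono
    rw [uIcc_of_le hh'.le]
    exact Icc_subset_Ici_self
  have h0 : ‖T 0 x‖ ^ 2 = ‖x‖ ^ 2 := by rw [hT0]; simp
  have hbound : ∀ t ∈ Set.uIoc (0:ℝ) h, ‖‖T t x‖ ^ 2 - ‖x‖ ^ 2‖ ≤ δε / 2 := by
    intro t htm
    rw [uIoc_of_le hh'.le] at htm
    have hd : dist t 0 < δ := by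
      rw [Real.dist_eq, sub_zero, abs_of_pos htm.1]
      linarith [htm.2]
    have h4 := hδc (mem_Ici.2 htm.1.le) hd
    rw [Real.dist_eq, h0] at h4
    rw [Real.norm_eq_abs]
    linarith
  have hnormint := intervalIntegral.norm_integral_le_of_norm_le_const hbound
  have hsub : (∫ t in (0:ℝ)..h, ‖T t x‖ ^ 2) - h * ‖x‖ ^ 2
      = ∫ t in (0:ℝ)..h, (‖T t x‖ ^ 2 - ‖x‖ ^ 2) := by
    rw [intervalIntegral.integral_sub hFI intervalIntegrable_const,
      intervalIntegral.integral_const]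
    simp [smul_eq_mul]
  rw [Real.dist_eq]
  have e1 : (∫ t in (0:ℝ)..h, ‖T t x‖ ^ 2) / h - ‖x‖ ^ 2
      = ((∫ t in (0:ℝ)..h, ‖T t x‖ ^ 2) - h * ‖x‖ ^ 2) / h := by
    field_simp
  rw [e1, hsub, abs_div, abs_of_pos hh']
  have e2 : |∫ t in (0:ℝ)..h, (‖T t x‖ ^ 2 - ‖x‖ ^ 2)| ≤ δε / 2 * h := by
    have := hnormint
    rw [Real.norm_eq_abs] at this
    rw [sub_zero, abs_of_pos hh'] at this
    exact this
  calc |∫ t in (0:ℝ)..h, (‖T t x‖ ^ 2 - ‖x‖ ^ 2)| / h ≤ (δε / 2 * h) / h := by gcongr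
    _ = δε / 2 := by rw [mul_div_assoc, div_self hh'.ne', mul_one]
    _ < δε := by linarith

lemma aux_wtend (T : ℝ → X →L[ℝ] X) (M : ℝ) (hM : 0 < M) (hT0 : T 0 = 1)
    (hTM : ∀ t : ℝ, 0 ≤ t → ‖T t‖ ≤ M)
    (hTcont : ∀ x : X, ContinuousOn (fun t => T t x) (Ici 0))
    (B : U →L[ℝ] X) (u : ℝ → U)
    (hII : ∀ h : ℝ, 0 < h → IntervalIntegrable (fun s => T (h - s) (B (u s))) volume 0 h)
    (hu0 : ContinuousWithinAt u (Ici 0) 0) :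
    Tendsto (fun h : ℝ => h⁻¹ • ∫ s in (0:ℝ)..h, T (h - s) (B (u s)))
      (nhdsWithin 0 (Ioi 0)) (nhds (B (u 0))) := by
  rw [Metric.tendsto_nhdsWithin_nhds]
  intro δε hδε
  have hc1 : ContinuousWithinAt (fun r : ℝ => T r (B (u 0))) (Ici 0) 0 :=
    hTcont _ 0 (mem_Ici.2 le_rfl)
  rw [Metric.continuousWithinAt_iff] at hc1
  obtain ⟨δ1, hδ1, hδc1⟩ := hc1 (δε / 4) (by linarith)
  have hu0' := hu0
  rw [Metric.continuousWithinAt_iff] at hu0'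
  obtain ⟨δ2, hδ2, hδc2⟩ := hu0' (δε / (4 * (M * ‖B‖ + 1))) (by positivity)
  refine ⟨min δ1 δ2, lt_min hδ1 hδ2, ?_⟩
  intro h hh hhd
  have hh' : (0:ℝ) < h := hh
  have hhδ : h < min δ1 δ2 := by rwa [Real.dist_eq, sub_zero, abs_of_pos hh'] at hhd
  have hIntg := hII h hh'
  have h00 : T 0 (B (u 0)) = B (u 0) := by rw [hT0]; simp
  have hbound : ∀ s ∈ Set.uIoc (0:ℝ) h, ‖T (h - s) (B (u s)) - B (u 0)‖ ≤ δε / 2 := by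
    intro s hsm
    rw [uIoc_of_le hh'.le] at hsm
    have hs0 : (0:ℝ) ≤ s := hsm.1.le
    have hsh : s ≤ h := hsm.2
    have hr0 : (0:ℝ) ≤ h - s := by linarith
    have t1 : ‖T (h - s) (B (u s)) - T (h - s) (B (u 0))‖ ≤ δε / 4 := by
      rw [← map_sub]
      have hds : dist s 0 < δ2 := by
        rw [Real.dist_eq, sub_zero, abs_of_nonneg hs0]
        exact lt_of_le_of_lt hsh (lt_of_lt_of_le hhδ (min_le_right _ _))
      have h2 := hδc2 (mem_Ici.2 hs0) hds
      rw [dist_eq_norm] at h2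
      have step1 : ‖T (h - s) (B (u s) - B (u 0))‖ ≤ M * (‖B‖ * ‖u s - u 0‖) := by
        calc ‖T (h - s) (B (u s) - B (u 0))‖
            ≤ ‖T (h - s)‖ * ‖B (u s) - B (u 0)‖ := (T (h - s)).le_opNorm _
          _ ≤ M * (‖B‖ * ‖u s - u 0‖) := by
              apply mul_le_mul (hTM _ hr0) ?_ (norm_nonneg _) hM.le
              rw [← map_sub]
              exact B.le_opNorm _
      have step2 : M * (‖B‖ * ‖u s - u 0‖) ≤ (M * ‖B‖ + 1) * (δε / (4 * (M * ‖B‖ + 1))) := by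
        rw [← mul_assoc]
        apply mul_le_mul (by nlinarith [norm_nonneg B]) h2.le (norm_nonneg _) (by positivity)
      have step3 : (M * ‖B‖ + 1) * (δε / (4 * (M * ‖B‖ + 1))) = δε / 4 := by
        have hMB1 : (0:ℝ) < M * ‖B‖ + 1 := by positivity
        field_simp
      linarith
    have t2 : ‖T (h - s) (B (u 0)) - B (u 0)‖ ≤ δε / 4 := by
      have hd : dist (h - s) 0 < δ1 := by
        rw [Real.dist_eq, sub_zero, abs_of_nonneg hr0]
        have hhs : h - s ≤ h := by linarith
        linarith [lt_of_lt_of_le hhδ (min_le_left δ1 δ2)]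
      have h5 := hδc1 (mem_Ici.2 hr0) hd
      rw [dist_eq_norm, h00] at h5
      exact h5.le
    calc ‖T (h - s) (B (u s)) - B (u 0)‖
        = ‖(T (h - s) (B (u s)) - T (h - s) (B (u 0)))
            + (T (h - s) (B (u 0)) - B (u 0))‖ := by rw [sub_add_sub_cancel]
      _ ≤ ‖T (h - s) (B (u s)) - T (h - s) (B (u 0))‖
            + ‖T (h - s) (B (u 0)) - B (u 0)‖ := norm_add_le _ _
      _ ≤ δε / 2 := by linarith
  have hnormint := intervalIntegral.norm_integral_le_of_norm_le_const hbound
  have hsub : (∫ s in (0:ℝ)..h, (T (h - s) (B (u s)) - B (u 0)))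
      = (∫ s in (0:ℝ)..h, T (h - s) (B (u s))) - h • B (u 0) := by
    rw [intervalIntegral.integral_sub hIntg intervalIntegrable_const,
      intervalIntegral.integral_const]
    simp
  rw [dist_eq_norm]
  have e3 : h⁻¹ • (∫ s in (0:ℝ)..h, T (h - s) (B (u s))) - B (u 0)
      = h⁻¹ • ((∫ s in (0:ℝ)..h, T (h - s) (B (u s))) - h • B (u 0)) := by
    rw [smul_sub, smul_smul, inv_mul_cancel₀ hh'.ne', one_smul]
  rw [e3, ← hsub, norm_smul, norm_inv, Real.norm_eq_abs, abs_of_pos hh']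
  have e4 : ‖∫ s in (0:ℝ)..h, (T (h - s) (B (u s)) - B (u 0))‖ ≤ δε / 2 * h := by
    have := hnormint
    rw [sub_zero, abs_of_pos hh'] at this
    exact this
  calc h⁻¹ * ‖∫ s in (0:ℝ)..h, (T (h - s) (B (u s)) - B (u 0))‖
      ≤ h⁻¹ * (δε / 2 * h) := mul_le_mul_of_nonneg_left e4 (by positivity)
    _ = δε / 2 := by
        rw [mul_comm (δε / 2) h, ← mul_assoc, inv_mul_cancel₀ hh'.ne', one_mul]
    _ < δε := by linarith


end AuxProofs

/-- Dissipation inequality for `V(x) = ∫_0^∞ ‖T_t x‖² dt` along mild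
solutions of the linear system `ẋ = Ax + Bu`: for every `ε > 0`,
`V̇_u(x) ≤ −‖x‖² + (εM²/(2λ))‖x‖² + (M²/(2λε))‖B‖²‖u(0)‖²`. -/
theorem quadratic_lyapunov_function_dissipation
    {X : Type*} [NormedAddCommGroup X] [NormedSpace ℝ X] [CompleteSpace X]
    {U : Type*} [NormedAddCommGroup U] [NormedSpace ℝ U]
    (T : ℝ → X →L[ℝ] X) (hT : IsC0Semigroup T)
    (M lam : ℝ) (hM : 0 < M) (hlam : 0 < lam)
    (hTdecay : ∀ t : ℝ, 0 ≤ t → ‖T t‖ ≤ M * Real.exp (-lam * t))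
    (B : U →L[ℝ] X)
    (x : X) (u : ℝ → U) (hu : AdmissibleInput u)
    (hu0 : ContinuousWithinAt u (Ici 0) 0)
    (ε : ℝ) (hε : 0 < ε) :
    DiniDerivAlong (fun z : X => ∫ t in Ioi (0:ℝ), ‖T t z‖ ^ 2)
        (fun h : ℝ => T h x + ∫ s in (0:ℝ)..h, T (h - s) (B (u s))) x
      ≤ ((-‖x‖ ^ 2 + ε * M ^ 2 / (2 * lam) * ‖x‖ ^ 2
            + M ^ 2 / (2 * lam * ε) * ‖B‖ ^ 2 * ‖u 0‖ ^ 2 : ℝ) : EReal) := by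
  classical
  obtain ⟨hT0, hTsem, hTcont⟩ := hT
  obtain ⟨hupc, C, hC⟩ := hu
  have hTM : ∀ t : ℝ, 0 ≤ t → ‖T t‖ ≤ M := aux_opnorm_le T M lam hM hTdecay hlam
  have hint : ∀ z : X, IntegrableOn (fun t => ‖T t z‖ ^ 2) (Ioi (0:ℝ)) :=
    aux_integrable T M lam hM hlam hTdecay hTcont
  set V : X → ℝ := fun z => ∫ t in Ioi (0:ℝ), ‖T t z‖ ^ 2 with hV
  set w : ℝ → X := fun h => ∫ s in (0:ℝ)..h, T (h - s) (B (u s)) with hwdef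
  have hA := aux_avg T hT0 hTcont x
  have hwt : Tendsto (fun h : ℝ => h⁻¹ • w h) (nhdsWithin 0 (Ioi 0)) (nhds (B (u 0))) :=
    aux_wtend T M hM hT0 hTM hTcont B u
      (fun h hh => aux_ii T M hM hTM hTcont B u hupc C hC h hh) hu0
  have hThx : Tendsto (fun h : ℝ => ‖T h x‖) (nhdsWithin 0 (Ioi 0)) (nhds ‖x‖) := by
    have hx0 : T 0 x = x := by rw [hT0]; simp
    have h1 : Tendsto (fun h : ℝ => T h x) (nhdsWithin 0 (Ioi 0)) (nhds (T 0 x)) :=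
      ((hTcont x 0 (mem_Ici.2 le_rfl)).tendsto).mono_left
        (nhdsWithin_mono _ Ioi_subset_Ici_self)
    rw [hx0] at h1
    exact h1.norm
  have hwn : Tendsto (fun h : ℝ => ‖h⁻¹ • w h‖) (nhdsWithin 0 (Ioi 0)) (nhds ‖B (u 0)‖) :=
    hwt.norm
  have hwz : Tendsto (fun h : ℝ => ‖w h‖) (nhdsWithin 0 (Ioi 0)) (nhds 0) := by
    have hid : Tendsto (fun h : ℝ => h) (nhdsWithin 0 (Ioi 0)) (nhds (0:ℝ)) :=
      Filter.Tendsto.mono_left tendsto_id nhdsWithin_le_nhds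
    have h1 : Tendsto (fun h : ℝ => h * ‖h⁻¹ • w h‖) (nhdsWithin 0 (Ioi 0))
        (nhds (0 * ‖B (u 0)‖)) := hid.mul hwn
    rw [zero_mul] at h1
    apply h1.congr'
    filter_upwards [self_mem_nhdsWithin] with h hh
    rw [norm_smul, norm_inv, Real.norm_eq_abs, abs_of_pos (show (0:ℝ) < h from hh),
      ← mul_assoc, mul_inv_cancel₀ (ne_of_gt (show (0:ℝ) < h from hh)), one_mul]
  set g : ℝ → ℝ := fun h => M ^ 2 / (2 * lam) * ((2 * ‖T h x‖ + ‖w h‖) * ‖h⁻¹ • w h‖)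
    - (∫ t in (0:ℝ)..h, ‖T t x‖ ^ 2) / h with hgdef
  have hgt : Tendsto g (nhdsWithin 0 (Ioi 0))
      (nhds (M ^ 2 / (2 * lam) * ((2 * ‖x‖ + 0) * ‖B (u 0)‖) - ‖x‖ ^ 2)) :=
    (tendsto_const_nhds.mul (((hThx.const_mul 2).add hwz).mul hwn)).sub hA
  have hev : ∀ᶠ h in nhdsWithin (0:ℝ) (Ioi 0),
      (((V (T h x + w h) - V x) / h : ℝ) : EReal) ≤ ((g h : ℝ) : EReal) := by
    filter_upwards [self_mem_nhdsWithin] with h hh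
    have hh' : (0:ℝ) < h := hh
    rw [EReal.coe_le_coe_iff]
    have e1 : V (T h x) = V x - ∫ t in (0:ℝ)..h, ‖T t x‖ ^ 2 :=
      aux_shift T hTsem x (hint x) h hh'
    have e2 : V (T h x + w h) - V (T h x)
        ≤ M ^ 2 / (2 * lam) * ((2 * ‖T h x‖ + ‖w h‖) * ‖w h‖) :=
      aux_diff T M lam hM hlam hTdecay hTcont (T h x) (w h)
    have hnorm : ‖h⁻¹ • w h‖ = ‖w h‖ / h := by
      rw [norm_smul, norm_inv, Real.norm_eq_abs, abs_of_pos hh', div_eq_inv_mul]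
    have step : (V (T h x + w h) - V x) / h
        ≤ (M ^ 2 / (2 * lam) * ((2 * ‖T h x‖ + ‖w h‖) * ‖w h‖)
            - (∫ t in (0:ℝ)..h, ‖T t x‖ ^ 2)) / h :=
      (div_le_div_iff_of_pos_right hh').2 (by linarith)
    refine step.trans_eq ?_
    simp only [hgdef]
    rw [hnorm, sub_div, mul_div_assoc, mul_div_assoc]
  have hBu : ‖B (u 0)‖ ≤ ‖B‖ * ‖u 0‖ := B.le_opNorm _
  have hfin : M ^ 2 / (2 * lam) * ((2 * ‖x‖ + 0) * ‖B (u 0)‖) - ‖x‖ ^ 2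
      ≤ -‖x‖ ^ 2 + ε * M ^ 2 / (2 * lam) * ‖x‖ ^ 2
        + M ^ 2 / (2 * lam * ε) * ‖B‖ ^ 2 * ‖u 0‖ ^ 2 := by
    have hK : (0:ℝ) < M ^ 2 / (2 * lam) := by positivity
    have key : 2 * ‖x‖ * ‖B (u 0)‖ * ε ≤ ε * ε * ‖x‖ ^ 2 + (‖B‖ * ‖u 0‖) ^ 2 := by
      nlinarith [sq_nonneg (ε * ‖x‖ - ‖B‖ * ‖u 0‖),
        mul_le_mul_of_nonneg_left hBu (by positivity : (0:ℝ) ≤ 2 * ε * ‖x‖),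
        norm_nonneg x, norm_nonneg (B (u 0))]
    have key2 : M ^ 2 / (2 * lam) * (2 * ‖x‖ * ‖B (u 0)‖)
        ≤ M ^ 2 / (2 * lam) * ε * ‖x‖ ^ 2 + M ^ 2 / (2 * lam) / ε * (‖B‖ * ‖u 0‖) ^ 2 := by
      have e5 : M ^ 2 / (2 * lam) * (2 * ‖x‖ * ‖B (u 0)‖)
          = (M ^ 2 / (2 * lam) / ε) * (2 * ‖x‖ * ‖B (u 0)‖ * ε) := by
        field_simp
      have e6 : (M ^ 2 / (2 * lam) / ε) * (ε * ε * ‖x‖ ^ 2 + (‖B‖ * ‖u 0‖) ^ 2)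
          = M ^ 2 / (2 * lam) * ε * ‖x‖ ^ 2 + M ^ 2 / (2 * lam) / ε * (‖B‖ * ‖u 0‖) ^ 2 := by
        field_simp
      rw [e5, ← e6]
      exact mul_le_mul_of_nonneg_left key (le_of_lt (div_pos hK hε))
    have e7 : ε * M ^ 2 / (2 * lam) = M ^ 2 / (2 * lam) * ε := by ring
    have e8 : M ^ 2 / (2 * lam * ε) * ‖B‖ ^ 2 * ‖u 0‖ ^ 2
        = M ^ 2 / (2 * lam) / ε * (‖B‖ * ‖u 0‖) ^ 2 := by
      rw [div_div]
      ring
    rw [e7, e8]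
    nlinarith [key2]
  have main : DiniDerivAlong V (fun h : ℝ => T h x + w h) x
      ≤ ((M ^ 2 / (2 * lam) * ((2 * ‖x‖ + 0) * ‖B (u 0)‖) - ‖x‖ ^ 2 : ℝ) : EReal) := by
    simp only [DiniDerivAlong]
    refine le_trans (Filter.limsup_le_limsup hev) ?_
    have hcoe : Tendsto (fun h : ℝ => ((g h : ℝ) : EReal)) (nhdsWithin 0 (Ioi 0))
        (nhds ((M ^ 2 / (2 * lam) * ((2 * ‖x‖ + 0) * ‖B (u 0)‖) - ‖x‖ ^ 2 : ℝ) : EReal)) :=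
      (continuous_coe_real_ereal.tendsto _).comp hgt
    exact le_of_eq hcoe.limsup_eq
  refine le_trans main ?_
  rw [EReal.coe_le_coe_iff]
  exact hfin
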